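/- Let φ be an r×1 vector of compactly supported functions in L²(ℝ) satisfying φ = 2∑_{k∈ℤ}a(k)φ(2·−k) a.e. for a finitely supported a:ℤ→ℂ^{r×r}, let φ^L be a finite family of compactly supported functions in L²([0,∞)), and suppose Φ := {φ^L}∪{φ(·−k): k≥n_φ} satisfies: every φ(·−k₀), k₀≥n_φ, is supported in [0,∞) with φ(·−k₀)=2∑_{k≥n_φ}a(k−2k₀)φ(2·−k) a.e., and φ^L = 2A_L·φ^L(2·)+2∑_{k≥n_φ}A(k)φ(2·−k) a.e. for some matrix A_L and finitely supported matrix sequence A. Let {j₀,…,j_ℓ} ⊆ {0,…,m−1} and suppose every η∈Φ has continuous one-sided derivatives of all orders less than m on some [0,ε_η), ε_η>0; define M_p(η) := (η^{(j₀)}(0),…,η^{(j_ℓ)}(0)) ∈ ℂ^{ℓ+1} (one-sided derivatives at 0). Then there exists an invertible complex matrix C of size (#φ^L+r)×(#φ^L+r) with the following property: writing the transformed family C·(φ^L; φ(·−n_φ)) as the concatenation of two blocks φ^{L,E} and φ^{L,I}, one has M_p(η)=0 for every η∈φ^{L,I} while {M_p(η): η∈φ^{L,E}} is a basis of the linear span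 of {M_p(η): η∈Φ}; moreover Φ^{bc} := {φ^{L,I}}∪{φ(·−k): k≥n_φ+1} again satisfies the analogous refinement structure with n_φ replaced by n_φ+1 (i.e., φ^{L,I} = 2A'_L·φ^{L,I}(2·)+2∑_{k≥n_φ+1}A'(k)φ(2·−k) a.e. for some matrix A'_L and finitely supported A'), and M_p(η)=0 for every η∈Φ^{bc}. -/

import Mathlib

open MeasureTheory Matrix Finset Filter

noncomputable section

namespace Wavelets

/-- membership in `L²(ℝ)` (w.r.t. Lebesgue measure). -/
def MemL2 (f : ℝ → ℂ) : Prop := MeasureTheory.MemLp f 2 (volume : Measure ℝ)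

/-- The `L²` inner product `⟨f,g⟩ = ∫ f · conj g`. -/
def inn (f g : ℝ → ℂ) : ℂ := ∫ x : ℝ, f x * (starRingEnd ℂ) (g x)

/-- The squared `L²` norm. -/
def nsq (f : ℝ → ℂ) : ℝ := ∫ x : ℝ, ‖f x‖ ^ 2

/-- supported (a.e.) in `[0,∞)`, i.e. `f` belongs to `L²([0,∞))` if it is also in `L²`. -/
def SuppHalf (f : ℝ → ℂ) : Prop := ∀ᵐ (x : ℝ) ∂volume, x < 0 → f x = 0

/-- vanishes a.e. outside the interval `[l,h]`. -/
def VanishOutside (f : ℝ → ℂ) (l h : ℤ) : Prop :=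
  ∀ᵐ (x : ℝ) ∂volume, x ∉ Set.Icc (l : ℝ) (h : ℝ) → f x = 0

/-- compactly supported (a.e.). -/
def CptSupp (f : ℝ → ℂ) : Prop := ∃ l h : ℤ, VanishOutside f l h

/-- `[l,h] = fs(f)` : the shortest integer-endpoint interval outside which all members of the
family `f` vanish a.e. -/
def IsFS {ι : Type*} (f : ι → ℝ → ℂ) (l h : ℤ) : Prop :=
  (∀ i, VanishOutside (f i) l h) ∧
    ∀ l' h' : ℤ, (∀ i, VanishOutside (f i) l' h') → l' ≤ l ∧ h ≤ h'

/-- `[l,h] = fs(a)` : the shortest integer interval containing the support of the sequence `a`. -/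
def IsFSfilter {M : Type*} [Zero M] (a : ℤ → M) (l h : ℤ) : Prop :=
  (∀ k : ℤ, k ∉ Set.Icc l h → a k = 0) ∧
    ∀ l' h' : ℤ, (∀ k : ℤ, k ∉ Set.Icc l' h' → a k = 0) → l' ≤ l ∧ h ≤ h'

/-- finitely supported sequence. -/
def FinSupp {M : Type*} [Zero M] (a : ℤ → M) : Prop := (Function.support a).Finite

/-- `(filtSum A φ i x) = (∑_{k∈ℤ} A(k)·φ(x−k))_i`. -/
def filtSum {B : Type*} {r : ℕ} (A : ℤ → Matrix B (Fin r) ℂ) (φ : Fin r → ℝ → ℂ)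
    (i : B) (x : ℝ) : ℂ :=
  ∑ᶠ k : ℤ, ∑ j : Fin r, A k i j * φ j (x - (k : ℝ))

/-- `(filtSumGe A φ n i x) = (∑_{k ≥ n} A(k)·φ(x−k))_i`. -/
def filtSumGe {B : Type*} {r : ℕ} (A : ℤ → Matrix B (Fin r) ℂ) (φ : Fin r → ℝ → ℂ)
    (n : ℤ) (i : B) (x : ℝ) : ℂ :=
  ∑ᶠ (k : ℤ) (_ : n ≤ k), ∑ j : Fin r, A k i j * φ j (x - (k : ℝ))

/-- dyadic dilation `2^{j/2} f(2^j ·)`. -/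
def dil (j : ℤ) (f : ℝ → ℂ) : ℝ → ℂ :=
  fun x => ((Real.sqrt 2 ^ j : ℝ) : ℂ) * f ((2 : ℝ) ^ j * x)

/-- finite linear combination of a family of functions. -/
def fc {I : Type*} (c : I →₀ ℂ) (F : I → ℝ → ℂ) : ℝ → ℂ :=
  fun x => ∑ i ∈ c.support, c i * F i x

/-- Riesz sequence (of functions, in `L²`). -/
def RieszSeq {I : Type*} (F : I → ℝ → ℂ) : Prop :=
  ∃ C > (0 : ℝ), ∀ c : I →₀ ℂ,
    C⁻¹ * (∑ i ∈ c.support, ‖c i‖ ^ 2) ≤ nsq (fc c F) ∧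
      nsq (fc c F) ≤ C * (∑ i ∈ c.support, ‖c i‖ ^ 2)

/-- Bessel sequence in `L²(ℝ)`. -/
def Bessel {I : Type*} (F : I → ℝ → ℂ) : Prop :=
  ∃ C > (0 : ℝ), ∀ f : ℝ → ℂ, MemL2 f → (∑' i : I, ‖inn f (F i)‖ ^ 2) ≤ C * nsq f

/-- Bessel sequence in `L²([0,∞))`. -/
def BesselHalf {I : Type*} (F : I → ℝ → ℂ) : Prop :=
  ∃ C > (0 : ℝ), ∀ f : ℝ → ℂ, MemL2 f → SuppHalf f →
    (∑' i : I, ‖inn f (F i)‖ ^ 2) ≤ C * nsq f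

/-- `f` lies in the `L²`-closure of the linear span of the family `F`. -/
def InClosedSpan {I : Type*} (F : I → ℝ → ℂ) (f : ℝ → ℂ) : Prop :=
  MemL2 f ∧ ∀ ε > (0 : ℝ), ∃ c : I →₀ ℂ, nsq (fun x => f x - fc c F x) < ε ^ 2

/-- Riesz basis of `L²(ℝ)`. -/
def RieszBasisR {I : Type*} (F : I → ℝ → ℂ) : Prop :=
  (∀ i, MemL2 (F i)) ∧ RieszSeq F ∧ ∀ f : ℝ → ℂ, MemL2 f → InClosedSpan F f

/-- Riesz basis of `L²([0,∞))`. -/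
def RieszBasisHalf {I : Type*} (F : I → ℝ → ℂ) : Prop :=
  (∀ i, MemL2 (F i) ∧ SuppHalf (F i)) ∧ RieszSeq F ∧
    ∀ f : ℝ → ℂ, MemL2 f → SuppHalf f → InClosedSpan F f

/-- biorthogonal families over the same index set. -/
def Biorth {I : Type*} [DecidableEq I] (F G : I → ℝ → ℂ) : Prop :=
  ∀ i j : I, inn (F i) (G j) = if i = j then 1 else 0

/-- orthonormal family of functions. -/
def OrthonormalFam {I : Type*} [DecidableEq I] (F : I → ℝ → ℂ) : Prop :=
  ∀ i j : I, inn (F i) (F j) = if i = j then 1 else 0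

/-- orthonormal basis of `L²([0,∞))`. -/
def ONBasisHalf {I : Type*} [DecidableEq I] (F : I → ℝ → ℂ) : Prop :=
  (∀ i, MemL2 (F i) ∧ SuppHalf (F i)) ∧ OrthonormalFam F ∧
    ∀ f : ℝ → ℂ, MemL2 f → SuppHalf f → InClosedSpan F f

/-- orthonormal basis of `L²(ℝ)`. -/
def ONBasisR {I : Type*} [DecidableEq I] (F : I → ℝ → ℂ) : Prop :=
  (∀ i, MemL2 (F i)) ∧ OrthonormalFam F ∧ ∀ f : ℝ → ℂ, MemL2 f → InClosedSpan F f

/-- `f` has (at least) `m` vanishing moments. -/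
def VMo (f : ℝ → ℂ) (m : ℕ) : Prop := ∀ j < m, (∫ x : ℝ, (x : ℂ) ^ j * f x) = 0

/-- index set of the affine system `AS₀(φ;ψ)` over `ℝ`. -/
abbrev ASIndexR (r : ℕ) := (Fin r × ℤ) ⊕ (Fin r × ℕ × ℤ)

/-- the affine system `AS₀(φ;ψ)` over the real line. -/
def ASR {r : ℕ} (φ ψ : Fin r → ℝ → ℂ) : ASIndexR r → ℝ → ℂ
  | Sum.inl (i, k) => fun x => φ i (x - (k : ℝ))
  | Sum.inr (i, j, k) => fun x =>
      ((Real.sqrt 2 ^ (j : ℕ) : ℝ) : ℂ) * ψ i ((2 : ℝ) ^ (j : ℕ) * x - (k : ℝ))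

/-- index set `{boundary} ⊔ {(component, shift k ≥ n)}`. -/
abbrev HIdx (B : Type*) (r : ℕ) (n : ℤ) := B ⊕ (Fin r × {k : ℤ // n ≤ k})

/-- the family `Φ = {φ^L} ∪ {φ(·−k) : k ≥ n}`. -/
def PhiFam {B : Type*} {r : ℕ} (φL : B → ℝ → ℂ) (φ : Fin r → ℝ → ℂ) (n : ℤ) :
    HIdx B r n → ℝ → ℂ
  | Sum.inl i => φL i
  | Sum.inr (i, k) => fun x => φ i (x - (k.1 : ℝ))

/-- the augmented boundary block `{φ^L} ∪ {φ(·−(n+t)) : 0 ≤ t < m}`. -/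
def bdryAug {B : Type*} {r : ℕ} (φL : B → ℝ → ℂ) (φ : Fin r → ℝ → ℂ) (n : ℤ) (m : ℕ) :
    (B ⊕ Fin r × Fin m) → ℝ → ℂ
  | Sum.inl i => φL i
  | Sum.inr (i, t) => fun x => φ i (x - ((n + (t : ℕ) : ℤ) : ℝ))

/-- index set of the system `AS_J(Φ;Ψ)_{[0,∞)}`. -/
abbrev ASIdxH (A B : Type*) (J : ℤ) := A ⊕ ({j : ℤ // J ≤ j} × B)

/-- the system `AS_J(Φ;Ψ)_{[0,∞)} = {2^{J/2}h(2^J·) : h ∈ Φ} ∪ {2^{j/2}η(2^j·) : j ≥ J, η ∈ Ψ}`. -/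
def ASH {A B : Type*} (Φ : A → ℝ → ℂ) (Ψ : B → ℝ → ℂ) (J : ℤ) : ASIdxH A B J → ℝ → ℂ
  | Sum.inl a => dil J (Φ a)
  | Sum.inr (j, b) => dil j.1 (Ψ b)

/-- nonstationary system `AS_J(Φ_J;{Ψ_j}_{j≥J})` where the scale `J+n` uses the family `Ψ n`. -/
def ASHns {A : Type*} {B : ℕ → Type*} (Φ : A → ℝ → ℂ) (Ψ : ∀ n, B n → ℝ → ℂ) (J : ℤ) :
    (A ⊕ (Σ n : ℕ, B n)) → ℝ → ℂ
  | Sum.inl a => dil J (Φ a)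
  | Sum.inr ⟨n, b⟩ => dil (J + (n : ℤ)) (Ψ n b)

/-- the Fourier series `û(ξ) = ∑_k u(k) e^{−ikξ}` of a finitely supported matrix filter. -/
def fhat {r : ℕ} (a : ℤ → Matrix (Fin r) (Fin r) ℂ) (ξ : ℝ) : Matrix (Fin r) (Fin r) ℂ :=
  ∑ᶠ k : ℤ, Complex.exp (-(Complex.I * (k : ℂ) * (ξ : ℂ))) • a k

/-- the shift `η(·−k₀)` is supported in `[0,∞)` and satisfies the one-sided refinement relation
`η(·−k₀) = 2 ∑_{k≥n} u(k−2k₀) φ(2·−k)`. -/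
def shiftRef {r : ℕ} (η φ : Fin r → ℝ → ℂ) (u : ℤ → Matrix (Fin r) (Fin r) ℂ)
    (n k₀ : ℤ) : Prop :=
  ∀ i : Fin r, (∀ᵐ (x : ℝ) ∂volume, x < 0 → η i (x - (k₀ : ℝ)) = 0) ∧
    ∀ᵐ (x : ℝ) ∂volume,
      η i (x - (k₀ : ℝ)) = 2 * filtSumGe (fun k => u (k - 2 * k₀)) φ n i (2 * x)

/-- the partial sums `∑_{i∈s} c_i F_i` converge (as a net over finite subsets) to `f` in `L²`. -/
def L2LimTo {I : Type*} (c : I → ℂ) (F : I → ℝ → ℂ) (f : ℝ → ℂ) : Prop :=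
  ∀ ε > (0 : ℝ), ∃ s₀ : Finset I, ∀ s : Finset I, s₀ ⊆ s →
    nsq (fun x => f x - ∑ i ∈ s, c i * F i x) < ε ^ 2

/-- `p(d/dx) f(x) |_{x=0}` with one-sided (right) derivatives at `0`. -/
def pD (p : Polynomial ℂ) (f : ℝ → ℂ) : ℂ :=
  ∑ n ∈ Finset.range (p.natDegree + 1),
    p.coeff n * iteratedDerivWithin n f (Set.Ici (0 : ℝ)) 0

/-- Riesz sequence in an abstract Hilbert space. -/
def RieszSeqH {H : Type*} [NormedAddCommGroup H] [InnerProductSpace ℂ H]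
    {I : Type*} (h : I → H) : Prop :=
  ∃ C > (0 : ℝ), ∀ c : I →₀ ℂ,
    C⁻¹ * (∑ i ∈ c.support, ‖c i‖ ^ 2) ≤ ‖∑ i ∈ c.support, c i • h i‖ ^ 2 ∧
      ‖∑ i ∈ c.support, c i • h i‖ ^ 2 ≤ C * (∑ i ∈ c.support, ‖c i‖ ^ 2)

/-- Bessel sequence in an abstract Hilbert space. -/
def BesselH {H : Type*} [NormedAddCommGroup H] [InnerProductSpace ℂ H]
    {I : Type*} (h : I → H) : Prop :=
  ∃ C > (0 : ℝ), ∀ f : H, (∑' i : I, ‖(inner ℂ f (h i) : ℂ)‖ ^ 2) ≤ C * ‖f‖ ^ 2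

/-- reindexing of `Φ = {φ^L}∪{φ(·−k):k≥n}` splitting off the shifts `n ≤ k < nt` into the
boundary block. -/
def phiReindex {p r : ℕ} (n nt : ℤ) (h : n ≤ nt) :
    HIdx (Fin p) r n → HIdx (Fin p ⊕ Fin r × Fin (nt - n).toNat) r nt
  | Sum.inl i => Sum.inl (Sum.inl i)
  | Sum.inr (i, k) =>
      if hk : nt ≤ k.1 then Sum.inr (i, ⟨k.1, hk⟩)
      else Sum.inl (Sum.inr (i, ⟨(k.1 - n).toNat, by
        have hnk := k.2; omega⟩))

/-- embedding of the boundary block `{ψ^L}∪{ψ(·−(n+t)) : t < m}` into `{ψ^L}∪{ψ(·−k):k≥n}`. -/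
def embBdry {q r : ℕ} (n : ℤ) (m : ℕ) :
    (Fin q ⊕ Fin r × Fin m) → HIdx (Fin q) r n
  | Sum.inl i => Sum.inl i
  | Sum.inr (i, t) => Sum.inr (i, ⟨n + (t : ℕ), by omega⟩)

/-- A compactly supported biorthogonal (multi)wavelet in `L²(ℝ)` together with a finitely
supported biorthogonal wavelet filter bank, as in Theorem `thm:bw` of the paper. -/
structure BiorthWaveletFB (r : ℕ) where
  φ : Fin r → ℝ → ℂ
  ψ : Fin r → ℝ → ℂ
  tφ : Fin r → ℝ → ℂ
  tψ : Fin r → ℝ → ℂ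
  a : ℤ → Matrix (Fin r) (Fin r) ℂ
  b : ℤ → Matrix (Fin r) (Fin r) ℂ
  ta : ℤ → Matrix (Fin r) (Fin r) ℂ
  tb : ℤ → Matrix (Fin r) (Fin r) ℂ
  memL2 : ∀ i, MemL2 (φ i) ∧ MemL2 (ψ i) ∧ MemL2 (tφ i) ∧ MemL2 (tψ i)
  cpt : ∀ i, CptSupp (φ i) ∧ CptSupp (ψ i) ∧ CptSupp (tφ i) ∧ CptSupp (tψ i)
  fin_a : FinSupp a
  fin_b : FinSupp b
  fin_ta : FinSupp ta
  fin_tb : FinSupp tb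
  ref_φ : ∀ i, ∀ᵐ (x : ℝ) ∂volume, φ i x = 2 * filtSum a φ i (2 * x)
  ref_ψ : ∀ i, ∀ᵐ (x : ℝ) ∂volume, ψ i x = 2 * filtSum b φ i (2 * x)
  ref_tφ : ∀ i, ∀ᵐ (x : ℝ) ∂volume, tφ i x = 2 * filtSum ta tφ i (2 * x)
  ref_tψ : ∀ i, ∀ᵐ (x : ℝ) ∂volume, tψ i x = 2 * filtSum tb tφ i (2 * x)
  biorth_shift : ∀ k : ℤ, ∀ i j : Fin r,
    inn (φ i) (fun x => tφ j (x - (k : ℝ))) = if k = 0 ∧ i = j then 1 else 0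
  pr₁ : ∀ ξ : ℝ,
    fhat ta ξ * (fhat a ξ)ᴴ + fhat ta (ξ + Real.pi) * (fhat a (ξ + Real.pi))ᴴ = 1
  pr₂ : ∀ ξ : ℝ,
    fhat ta ξ * (fhat b ξ)ᴴ + fhat ta (ξ + Real.pi) * (fhat b (ξ + Real.pi))ᴴ = 0
  pr₃ : ∀ ξ : ℝ,
    fhat tb ξ * (fhat a ξ)ᴴ + fhat tb (ξ + Real.pi) * (fhat a (ξ + Real.pi))ᴴ = 0
  pr₄ : ∀ ξ : ℝ,
    fhat tb ξ * (fhat b ξ)ᴴ + fhat tb (ξ + Real.pi) * (fhat b (ξ + Real.pi))ᴴ = 1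
  rieszR : RieszBasisR (ASR φ ψ)
  rieszRt : RieszBasisR (ASR tφ tψ)
  biorthAS : Biorth (ASR φ ψ) (ASR tφ tψ)

/-- A compactly supported biorthogonal (multi)wavelet in `L²(ℝ)` (no filter bank data). -/
structure BiorthWavelet (r : ℕ) where
  φ : Fin r → ℝ → ℂ
  ψ : Fin r → ℝ → ℂ
  tφ : Fin r → ℝ → ℂ
  tψ : Fin r → ℝ → ℂ
  memL2 : ∀ i, MemL2 (φ i) ∧ MemL2 (ψ i) ∧ MemL2 (tφ i) ∧ MemL2 (tψ i)
  cpt : ∀ i, CptSupp (φ i) ∧ CptSupp (ψ i) ∧ CptSupp (tφ i) ∧ CptSupp (tψ i)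
  rieszR : RieszBasisR (ASR φ ψ)
  rieszRt : RieszBasisR (ASR tφ tψ)
  biorthAS : Biorth (ASR φ ψ) (ASR tφ tψ)



/-! ### Auxiliary lemmas -/
section AuxLemmas
open Set


lemma ae_shift {P : ℝ → Prop} (h : ∀ᵐ x : ℝ ∂volume, P x) (c : ℝ) :
    ∀ᵐ x : ℝ ∂volume, P (x + c) :=
  ((measurePreserving_add_right (volume : Measure ℝ) c).quasiMeasurePreserving.tendsto_ae).eventually h

lemma eqzero_of_ae_zero {g : ℝ → ℂ} {ε δ : ℝ} (hε : 0 < ε) (hδ : 0 < δ)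
    (hg : ContinuousOn g (Set.Ico 0 ε)) (hae : ∀ᵐ x : ℝ ∂volume, x ∈ Set.Ioo (0:ℝ) δ → g x = 0) :
    ∀ x ∈ Set.Ico (0:ℝ) (min ε δ), g x = 0 := by
  rintro x ⟨hx0, hxm⟩
  rw [ae_iff] at hae
  set N := {x : ℝ | ¬(x ∈ Set.Ioo (0:ℝ) δ → g x = 0)} with hN
  set S := {y : ℝ | g y = 0} ∩ Set.Ioo x (min ε δ) with hS
  have hSsub : S ⊆ Set.Ico 0 ε := fun y hy =>
    ⟨le_trans hx0 (le_of_lt hy.2.1), lt_of_lt_of_le hy.2.2 (min_le_left _ _)⟩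
  have hclos : x ∈ closure S := by
    rw [mem_closure_iff]
    intro o ho hxo
    obtain ⟨η, hη, hball⟩ := Metric.isOpen_iff.1 ho x hxo
    set b := min (x + η) (min ε δ) with hb
    have hxb : x < b := lt_min (by linarith) hxm
    have hvol : volume (Set.Ioo x b) ≠ 0 := by
      rw [Real.volume_Ioo]
      simp only [ne_eq, ENNReal.ofReal_eq_zero, not_le]
      linarith
    have hns : ¬ (Set.Ioo x b ⊆ N) := fun hsub => hvol (measure_mono_null hsub hae)
    obtain ⟨y, hy, hyN⟩ := not_subset.1 hns
    have hyb : y < b := hy.2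
    have hymin : y < min ε δ := lt_of_lt_of_le hyb (min_le_right _ _)
    have hgy : g y = 0 := by
      by_contra hne
      exact hyN (by simp only [hN, Set.mem_setOf_eq]; intro hcon; exact absurd (hcon ⟨lt_of_le_of_lt hx0 hy.1, lt_of_lt_of_le hymin (min_le_right _ _)⟩) hne)
    refine ⟨y, hball ?_, hgy, hy.1, hymin⟩
    rw [Metric.mem_ball, Real.dist_eq, abs_lt]
    constructor
    · linarith [hy.1]
    · have := lt_of_lt_of_le hyb (min_le_left _ _); linarith
  have hne : (nhdsWithin x S).NeBot := mem_closure_iff_nhdsWithin_neBot.1 hclos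
  have h1 : Tendsto g (nhdsWithin x S) (nhds (g x)) :=
    ((hg x ⟨hx0, lt_of_lt_of_le hxm (min_le_left _ _)⟩).mono hSsub)
  have h2 : Tendsto g (nhdsWithin x S) (nhds 0) := by
    refine Tendsto.congr' ?_ tendsto_const_nhds
    filter_upwards [self_mem_nhdsWithin] with y hy
    exact hy.1.symm
  exact tendsto_nhds_unique h1 h2

lemma dW_congr {f g : ℝ → ℂ} {δ : ℝ} (hδ : 0 < δ)
    (h : ∀ x ∈ Set.Ico (0:ℝ) δ, f x = g x) (j : ℕ) :
    iteratedDerivWithin j f (Set.Ici 0) 0 = iteratedDerivWithin j g (Set.Ici 0) 0 := by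
  have hev : f =ᶠ[nhdsWithin (0:ℝ) (Set.Ici 0)] g := by
    have hmem : Set.Ici (0:ℝ) ∩ Set.Iio δ ∈ nhdsWithin (0:ℝ) (Set.Ici 0) :=
      inter_mem_nhdsWithin _ (Iio_mem_nhds hδ)
    filter_upwards [hmem] with y hy using h y ⟨hy.1, hy.2⟩
  rw [iteratedDerivWithin_eq_iteratedFDerivWithin, iteratedDerivWithin_eq_iteratedFDerivWithin,
    hev.iteratedFDerivWithin_eq (h 0 ⟨le_refl _, hδ⟩) j]

lemma dW_zero' {f : ℝ → ℂ} {δ : ℝ} (hδ : 0 < δ)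
    (h : ∀ x ∈ Set.Ico (0:ℝ) δ, f x = 0) (j : ℕ) :
    iteratedDerivWithin j f (Set.Ici 0) 0 = 0 := by
  rw [dW_congr hδ (g := fun _ => (0:ℂ)) h j, iteratedDerivWithin_eq_iteratedFDerivWithin,
    iteratedFDerivWithin_zero_fun]
  simp

lemma dW_Ico {f : ℝ → ℂ} {ε : ℝ} (hε : 0 < ε) (j : ℕ) :
    iteratedDerivWithin j f (Set.Ici 0) 0 = iteratedDerivWithin j f (Set.Ico 0 ε) 0 := by
  rw [show Set.Ico (0:ℝ) ε = Set.Ici 0 ∩ Set.Iio ε from (Set.Ici_inter_Iio).symm,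
    iteratedDerivWithin_eq_iteratedFDerivWithin, iteratedDerivWithin_eq_iteratedFDerivWithin,
    iteratedFDerivWithin_inter (Iio_mem_nhds hε)]

lemma dW_sum_Ico {ι : Type*} [DecidableEq ι] (c : ι → ℂ) (F : ι → ℝ → ℂ) {j : ℕ} {ε : ℝ}
    (hε : 0 < ε) :
    ∀ (s : Finset ι), (∀ i ∈ s, ContDiffOn ℝ j (F i) (Set.Ico 0 ε)) →
    iteratedDerivWithin j (fun x => ∑ i ∈ s, c i * F i x) (Set.Ico 0 ε) 0
      = ∑ i ∈ s, c i * iteratedDerivWithin j (F i) (Set.Ico 0 ε) 0 := by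
  have h0 : (0:ℝ) ∈ Set.Ico (0:ℝ) ε := ⟨le_refl _, hε⟩
  have hu : UniqueDiffOn ℝ (Set.Ico (0:ℝ) ε) := uniqueDiffOn_Ico 0 ε
  intro s
  induction s using Finset.induction with
  | empty =>
      intro _
      simp only [Finset.sum_empty]
      rw [iteratedDerivWithin_eq_iteratedFDerivWithin,
        iteratedFDerivWithin_zero_fun]
      simp
  | insert a s hni ih =>
      intro hF
      have hca : ContDiffOn ℝ j (fun x => c a * F a x) (Set.Ico (0:ℝ) ε) :=
        ContDiffOn.mul contDiffOn_const (hF a (Finset.mem_insert_self a s))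
      have hFs : ∀ i ∈ s, ContDiffOn ℝ j (F i) (Set.Ico (0:ℝ) ε) :=
        fun i hi => hF i (Finset.mem_insert_of_mem hi)
      have hsum : ContDiffOn ℝ j (fun x => ∑ i ∈ s, c i * F i x) (Set.Ico (0:ℝ) ε) :=
        ContDiffOn.sum fun i hi => ContDiffOn.mul contDiffOn_const (hFs i hi)
      have hsplit : (fun x => ∑ i ∈ insert a s, c i * F i x)
          = (fun x => c a * F a x) + (fun x => ∑ i ∈ s, c i * F i x) := by
        funext x; simp [Finset.sum_insert hni]
      have hcm : iteratedDerivWithin j (fun x => c a * F a x) (Set.Ico (0:ℝ) ε) 0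
          = c a * iteratedDerivWithin j (F a) (Set.Ico (0:ℝ) ε) 0 := by
        have := iteratedDerivWithin_const_smul (𝕜 := ℝ) (F := ℂ) (R := ℂ) h0 hu (c a)
          (hF a (Finset.mem_insert_self a s) 0 h0)
        simpa [Pi.smul_apply, smul_eq_mul] using this
      rw [hsplit, iteratedDerivWithin_add h0 hu (hca 0 h0) (hsum 0 h0), hcm, ih hFs, Finset.sum_insert hni]

lemma dW_sum {ι : Type*} [DecidableEq ι] (s : Finset ι) (c : ι → ℂ) (F : ι → ℝ → ℂ) {j : ℕ} {ε : ℝ}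
    (hε : 0 < ε) (hF : ∀ i ∈ s, ContDiffOn ℝ j (F i) (Set.Ico 0 ε)) :
    iteratedDerivWithin j (fun x => ∑ i ∈ s, c i * F i x) (Set.Ici 0) 0
      = ∑ i ∈ s, c i * iteratedDerivWithin j (F i) (Set.Ici 0) 0 := by
  rw [dW_Ico hε, dW_sum_Ico c F hε s hF]
  exact Finset.sum_congr rfl fun i hi => by rw [dW_Ico hε]

-- scaling on Set.Ici 0
lemma dW_comp_two_aux {g : ℝ → ℂ} {j : ℕ} (hg : ContDiffOn ℝ j g (Set.Ici 0)) :
    ∀ n : ℕ, n ≤ j → ∀ x : ℝ, 0 ≤ x →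
      iteratedDerivWithin n (fun y => g (2*y)) (Set.Ici 0) x
        = 2^n * iteratedDerivWithin n g (Set.Ici 0) (2*x) := by
  intro n
  induction n with
  | zero => intro _ x _; simp [iteratedDerivWithin_zero]
  | succ n ih =>
      intro hn x hx
      have hu := uniqueDiffOn_Ici (0:ℝ)
      have hx' : x ∈ Set.Ici (0:ℝ) := hx
      have h2x : (2*x) ∈ Set.Ici (0:ℝ) := by simp; linarith
      rw [iteratedDerivWithin_succ, iteratedDerivWithin_succ]
      set G := iteratedDerivWithin n g (Set.Ici (0:ℝ)) with hG
      have hGd : DifferentiableWithinAt ℝ G (Set.Ici 0) (2*x) :=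
        (hg.differentiableOn_iteratedDerivWithin (by exact_mod_cast Nat.lt_of_lt_of_le (Nat.lt_succ_self n) hn) hu) (2*x) h2x
      have hmap : MapsTo (fun y : ℝ => 2*y) (Set.Ici 0) (Set.Ici 0) := fun y hy => by
        simp only [Set.mem_Ici] at *; linarith
      have h2y : HasDerivWithinAt (fun y : ℝ => 2*y) 2 (Set.Ici 0) x := by
        simpa using ((hasDerivAt_id x).const_mul 2).hasDerivWithinAt (s := Set.Ici 0)
      have hcomp : HasDerivWithinAt (G ∘ (fun y : ℝ => 2*y))
          ((2:ℝ) • derivWithin G (Set.Ici 0) (2*x)) (Set.Ici 0) x :=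
        HasDerivWithinAt.scomp x hGd.hasDerivWithinAt h2y hmap
      have hcongr : EqOn (iteratedDerivWithin n (fun y => g (2*y)) (Set.Ici 0))
          (fun y => 2^n * G (2*y)) (Set.Ici 0) := fun y hy =>
        ih (Nat.le_of_succ_le hn) y hy
      rw [derivWithin_congr hcongr (hcongr hx')]
      have hdiff : DifferentiableWithinAt ℝ (fun y : ℝ => G (2*y)) (Set.Ici 0) x :=
        hcomp.differentiableWithinAt
      rw [derivWithin_const_mul ((2:ℂ)^n) hdiff]
      have hd : derivWithin (fun y : ℝ => G (2*y)) (Set.Ici 0) x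
          = (2:ℝ) • derivWithin G (Set.Ici 0) (2*x) := hcomp.derivWithin (hu x hx')
      rw [hd, Complex.real_smul]
      push_cast
      ring

/-- scaling lemma with only local smoothness -/
lemma dW_comp_two {h : ℝ → ℂ} {j : ℕ} {ε : ℝ} (hε : 0 < ε)
    (hh : ContDiffOn ℝ j h (Set.Ico 0 ε)) :
    iteratedDerivWithin j (fun x => h (2*x)) (Set.Ici 0) 0
      = 2^j * iteratedDerivWithin j h (Set.Ici 0) 0 := by
  set χ : ContDiffBump (0:ℝ) := ⟨ε/3, ε/2, by positivity, by linarith⟩ with hχdef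
  set g : ℝ → ℂ := fun y => ((χ y : ℝ) : ℂ) * h y with hgdef
  have hχsupp : ∀ y : ℝ, ε/2 ≤ y → (χ y : ℝ) = 0 := by
    intro y hy
    have : y ∉ Function.support (χ : ℝ → ℝ) := by
      rw [χ.support_eq]
      simp only [Metric.mem_ball, Real.dist_eq, sub_zero, not_lt]
      rw [abs_of_nonneg (by linarith)]
      simpa [hχdef] using hy
    simpa using Function.notMem_support.1 this
  have hχone : ∀ y : ℝ, 0 ≤ y → y ≤ ε/3 → (χ y : ℝ) = 1 := by
    intro y hy1 hy2
    apply χ.one_of_mem_closedBall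
    simp only [Metric.mem_closedBall, Real.dist_eq, sub_zero]
    rw [abs_of_nonneg hy1]
    simpa [hχdef] using hy2
  have hcast : ContDiff ℝ (j : ℕ) (fun y : ℝ => ((χ y : ℝ) : ℂ)) := by
    exact Complex.ofRealCLM.contDiff.comp ((χ.contDiff (n := ⊤)).of_le (by
      exact_mod_cast le_top))
  have hg : ContDiffOn ℝ j g (Set.Ici 0) := by
    apply contDiffOn_of_locally_contDiffOn
    intro y hy
    rcases lt_or_ge y ε with hcase | hcase
    · refine ⟨Set.Iio ε, isOpen_Iio, hcase, ?_⟩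
      rw [Set.Ici_inter_Iio]
      exact (hcast.contDiffOn).mul hh
    · refine ⟨Ioi (ε/2), isOpen_Ioi, by simp; linarith, ?_⟩
      have : EqOn g (fun _ => (0:ℂ)) (Set.Ici 0 ∩ Ioi (ε/2)) := by
        intro z hz
        have : (χ z : ℝ) = 0 := hχsupp z (le_of_lt hz.2)
        simp [hgdef, this]
      exact (contDiffOn_const).congr this
  have h1 : iteratedDerivWithin j (fun x => h (2*x)) (Set.Ici 0) 0
      = iteratedDerivWithin j (fun x => g (2*x)) (Set.Ici 0) 0 := by
    apply dW_congr (show (0:ℝ) < ε/6 by linarith)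
    intro x hx
    have h1 : (χ (2*x) : ℝ) = 1 := hχone _ (by linarith [hx.1]) (by linarith [hx.2])
    simp [hgdef, h1]
  have h2 : iteratedDerivWithin j h (Set.Ici 0) 0
      = iteratedDerivWithin j g (Set.Ici 0) 0 := by
    apply dW_congr (show (0:ℝ) < ε/3 by linarith)
    intro x hx
    have h1 : (χ x : ℝ) = 1 := hχone _ hx.1 (le_of_lt hx.2)
    simp [hgdef, h1]
  rw [h1, h2]
  have := dW_comp_two_aux hg j le_rfl 0 le_rfl
  simpa using this

lemma filtSumGe_eq_sum {β : Type*} {r : ℕ} (A : ℤ → Matrix β (Fin r) ℂ) (φ : Fin r → ℝ → ℂ)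
    (n : ℤ) (i : β) (x : ℝ) (T : Finset ℤ) (hT : ∀ k, A k ≠ 0 → k ∈ T) :
    filtSumGe A φ n i x
      = ∑ k ∈ T.filter (fun k => n ≤ k), ∑ j, A k i j * φ j (x - (k:ℝ)) := by
  classical
  have hz : ∀ k : ℤ, A k = 0 → ∑ j, A k i j * φ j (x - (k:ℝ)) = 0 := by
    intro k hk
    simp [hk]
  rw [show filtSumGe A φ n i x
      = ∑ᶠ (k : ℤ) (_ : k ∈ {k : ℤ | n ≤ k}), ∑ j, A k i j * φ j (x - (k:ℝ)) from rfl]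
  apply finsum_mem_eq_sum_of_inter_support_eq
  ext k
  simp only [Set.mem_inter_iff, Set.mem_setOf_eq, Function.mem_support, Finset.coe_filter,
    Finset.mem_coe, Finset.mem_filter]
  constructor
  · rintro ⟨hk, hne⟩
    have hA : A k ≠ 0 := fun h0 => hne (hz k h0)
    exact ⟨⟨hT k hA, hk⟩, hne⟩
  · rintro ⟨⟨_, hk⟩, hne⟩
    exact ⟨hk, hne⟩

lemma filtSumGe_split {β : Type*} {r : ℕ} (A : ℤ → Matrix β (Fin r) ℂ) (φ : Fin r → ℝ → ℂ)
    (n : ℤ) (i : β) (x : ℝ) (T : Finset ℤ) (hT : ∀ k, A k ≠ 0 → k ∈ T) :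
    filtSumGe A φ n i x
      = (∑ j, A n i j * φ j (x - (n:ℝ))) + filtSumGe A φ (n+1) i x := by
  classical
  set T' := insert n T with hT'
  have hT'' : ∀ k, A k ≠ 0 → k ∈ T' := fun k hk => Finset.mem_insert_of_mem (hT k hk)
  rw [filtSumGe_eq_sum A φ n i x T' hT'', filtSumGe_eq_sum A φ (n+1) i x T' hT'']
  have hfil : T'.filter (fun k => n ≤ k)
      = insert n (T'.filter (fun k => n+1 ≤ k)) := by
    ext k
    simp only [Finset.mem_filter, Finset.mem_insert, hT']
    constructor
    · rintro ⟨h1, h2⟩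
      rcases eq_or_ne k n with rfl | hk
      · exact Or.inl rfl
      · exact Or.inr ⟨h1, by omega⟩
    · rintro (rfl | ⟨h1, h2⟩)
      · exact ⟨Or.inl rfl, le_refl _⟩
      · exact ⟨h1, by omega⟩
  rw [hfil, Finset.sum_insert (by simp [Finset.mem_filter])]

lemma exists_pos_forall_Ico {ι : Type*} (s : Finset ι) (P : ι → ℝ → Prop)
    (h : ∀ i ∈ s, ∃ δ > 0, ∀ x ∈ Set.Ico (0:ℝ) δ, P i x) :
    ∃ δ > 0, ∀ x ∈ Set.Ico (0:ℝ) δ, ∀ i ∈ s, P i x := by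
  classical
  induction s using Finset.induction with
  | empty => exact ⟨1, one_pos, by simp⟩
  | insert a s hni ih =>
      obtain ⟨δ₁, hδ₁, h₁⟩ := h a (Finset.mem_insert_self a s)
      obtain ⟨δ₂, hδ₂, h₂⟩ := ih (fun i hi => h i (Finset.mem_insert_of_mem hi))
      refine ⟨min δ₁ δ₂, lt_min hδ₁ hδ₂, fun x hx i hi => ?_⟩
      rcases Finset.mem_insert.1 hi with rfl | hi'
      · exact h₁ x ⟨hx.1, lt_of_lt_of_le hx.2 (min_le_left _ _)⟩
      · exact h₂ x ⟨hx.1, lt_of_lt_of_le hx.2 (min_le_right _ _)⟩ i hi'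


lemma exists_pos_le {ι : Type*} [Fintype ι] (ε : ι → ℝ) (h : ∀ i, 0 < ε i) :
    ∃ δ > 0, ∀ i, δ ≤ ε i := by
  classical
  rcases isEmpty_or_nonempty ι with hι | hι
  · exact ⟨1, one_pos, fun i => (IsEmpty.false i).elim⟩
  · refine ⟨Finset.univ.inf' Finset.univ_nonempty ε, ?_, fun i => Finset.inf'_le ε (Finset.mem_univ i)⟩
    rw [gt_iff_lt, Finset.lt_inf'_iff]
    exact fun i _ => h i

end AuxLemmas

set_option maxHeartbeats 4000000

/-- modification of the boundary refinable functions so that all elements of the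
new family `Φ^{bc}` satisfy the homogeneous boundary conditions `η^{(j_t)}(0) = 0`. -/
theorem boundary_condition_modification
    {r p m ℓ : ℕ}
    (φ : Fin r → ℝ → ℂ) (hφ2 : ∀ i, MemL2 (φ i)) (hφc : ∀ i, CptSupp (φ i))
    (a : ℤ → Matrix (Fin r) (Fin r) ℂ) (hfa : FinSupp a)
    (hrefφ : ∀ i, ∀ᵐ (x : ℝ) ∂volume, φ i x = 2 * filtSum a φ i (2 * x))
    (φL : Fin p → ℝ → ℂ)
    (hφL : ∀ i, MemL2 (φL i) ∧ SuppHalf (φL i) ∧ CptSupp (φL i))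
    (nφ : ℤ)
    -- item (i)
    (hi₁ : ∀ k₀ : ℤ, nφ ≤ k₀ → shiftRef φ φ a nφ k₀)
    (AL : Matrix (Fin p) (Fin p) ℂ) (A : ℤ → Matrix (Fin p) (Fin r) ℂ) (hfA : FinSupp A)
    (hrefφL : ∀ i, ∀ᵐ (x : ℝ) ∂volume,
      φL i x = 2 * ∑ i', AL i i' * φL i' (2 * x) + 2 * filtSumGe A φ nφ i (2 * x))
    -- the orders of the boundary conditions and the smoothness hypothesis
    (js : Fin (ℓ + 1) → ℕ) (hjs : ∀ t, js t < m)
    (hsmooth : ∀ w : HIdx (Fin p) r nφ, ∃ ε > (0 : ℝ),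
      ContDiffOn ℝ ((m - 1 : ℕ) : ℕ∞) (PhiFam φL φ nφ w) (Set.Ico (0 : ℝ) ε)) :
    ∃ pE pI : ℕ, pE + pI = p + r ∧
    ∃ (C : Matrix (Fin pE ⊕ Fin pI) (Fin p ⊕ Fin r) ℂ)
      (D : Matrix (Fin p ⊕ Fin r) (Fin pE ⊕ Fin pI) ℂ),
      C * D = 1 ∧ D * C = 1 ∧
      (let base : (Fin p ⊕ Fin r) → ℝ → ℂ :=
        Sum.elim φL fun i => fun x => φ i (x - (nφ : ℝ))
       let φE : Fin pE → ℝ → ℂ := fun w x => ∑ w', C (Sum.inl w) w' * base w' x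
       let φI : Fin pI → ℝ → ℂ := fun w x => ∑ w', C (Sum.inr w) w' * base w' x
       let Mp : (ℝ → ℂ) → (Fin (ℓ + 1) → ℂ) :=
         fun f t => iteratedDerivWithin (js t) f (Set.Ici (0 : ℝ)) 0
       (∀ w, Mp (φI w) = 0) ∧
       LinearIndependent ℂ (fun w => Mp (φE w)) ∧
       Submodule.span ℂ (Set.range fun w => Mp (φE w)) =
         Submodule.span ℂ (Set.range fun w : HIdx (Fin p) r nφ => Mp (PhiFam φL φ nφ w)) ∧
       (∃ (AL' : Matrix (Fin pI) (Fin pI) ℂ) (A' : ℤ → Matrix (Fin pI) (Fin r) ℂ),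
         FinSupp A' ∧ ∀ w, ∀ᵐ (x : ℝ) ∂volume,
           φI w x = 2 * ∑ w', AL' w w' * φI w' (2 * x) +
             2 * filtSumGe A' φ (nφ + 1) w (2 * x)) ∧
       (∀ w : HIdx (Fin pI) r (nφ + 1), Mp (PhiFam φI φ (nφ + 1) w) = 0)) := by
  classical
  have hm1 : 0 < m := lt_of_le_of_lt (Nat.zero_le _) (hjs 0)
  have hjs' : ∀ t, js t ≤ m - 1 := fun t => by have := hjs t; omega
  set base : (Fin p ⊕ Fin r) → ℝ → ℂ :=
    Sum.elim φL (fun i => fun x => φ i (x - (nφ : ℝ))) with hbase_def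
  -- smoothness of the base family near 0
  have hsm0 : ∀ w : Fin p ⊕ Fin r, ∃ ε > 0,
      ContDiffOn ℝ ((m - 1 : ℕ) : ℕ∞) (base w) (Set.Ico (0:ℝ) ε) := by
    intro w
    cases w with
    | inl i => exact hsmooth (Sum.inl i)
    | inr i => exact hsmooth (Sum.inr (i, ⟨nφ, le_refl _⟩))
  choose εs hεspos hεsm using hsm0
  obtain ⟨εb, hεb, hεble⟩ := exists_pos_le εs hεspos
  have hsmb : ∀ w, ContDiffOn ℝ ((m - 1 : ℕ) : ℕ∞) (base w) (Set.Ico (0:ℝ) εb) :=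
    fun w => (hεsm w).mono (Set.Ico_subset_Ico_right (hεble w))
  have hsmj : ∀ (w) (j : ℕ), j ≤ m - 1 →
      ContDiffOn ℝ (j : ℕ) (base w) (Set.Ico (0:ℝ) εb) :=
    fun w j hj => (hsmb w).of_le (by exact_mod_cast hj)
  -- far shifts vanish pointwise near 0
  have hφz : ∀ (i : Fin r) (k : ℤ), nφ + 1 ≤ k →
      ∃ δ > 0, ∀ x ∈ Set.Ico (0:ℝ) δ, φ i (x - (k:ℝ)) = 0 := by
    intro i k hk
    obtain ⟨ε, hε, hc⟩ := hsmooth (Sum.inr (i, ⟨k, by omega⟩))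
    have hae0 : ∀ᵐ x : ℝ ∂volume, x < 0 → φ i (x - (nφ:ℝ)) = 0 := (hi₁ nφ le_rfl i).1
    have hae1 := ae_shift hae0 ((nφ:ℝ) - (k:ℝ))
    have hae2 : ∀ᵐ x : ℝ ∂volume, x ∈ Set.Ioo (0:ℝ) 1 → φ i (x - (k:ℝ)) = 0 := by
      filter_upwards [hae1] with x hx hxm
      have hcast : ((nφ:ℝ) + 1) ≤ (k:ℝ) := by exact_mod_cast hk
      have h1 : x + ((nφ:ℝ) - (k:ℝ)) < 0 := by have := hxm.2; linarith
      have h2 := hx h1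
      rw [show x + ((nφ:ℝ) - (k:ℝ)) - (nφ:ℝ) = x - (k:ℝ) by ring] at h2
      exact h2
    have hcont : ContinuousOn (fun x => φ i (x - (k:ℝ))) (Set.Ico (0:ℝ) ε) :=
      hc.continuousOn
    exact ⟨min ε 1, lt_min hε one_pos, eqzero_of_ae_zero hε one_pos hcont hae2⟩
  have hMps : ∀ (i : Fin r) (k : ℤ), nφ + 1 ≤ k → ∀ j : ℕ,
      iteratedDerivWithin j (fun x => φ i (x - (k:ℝ))) (Set.Ici 0) 0 = 0 := by
    intro i k hk j
    obtain ⟨δ, hδ, h0⟩ := hφz i k hk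
    exact dW_zero' hδ h0 j
  -- the one-step transition matrix and the filter tails
  set B : Matrix (Fin p ⊕ Fin r) (Fin p ⊕ Fin r) ℂ := Matrix.of (fun w w' =>
    Sum.elim (fun i => Sum.elim (fun i' => AL i i') (fun j => A nφ i j) w')
             (fun i => Sum.elim (fun _ => (0:ℂ)) (fun j => a (nφ - 2*nφ) i j) w') w)
    with hB_def
  set Ab : ℤ → Matrix (Fin p ⊕ Fin r) (Fin r) ℂ := fun k => Matrix.of (fun w j =>
    Sum.elim (fun i => A k i j) (fun i => a (k - 2*nφ) i j) w) with hAb_def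
  set S : Finset ℤ := hfA.toFinset ∪ hfa.toFinset.image (fun k => k + 2*nφ) with hS_def
  have hS_A : ∀ k, A k ≠ 0 → k ∈ S := fun k hk =>
    Finset.mem_union_left _ ((Set.Finite.mem_toFinset hfA).2 hk)
  have hS_a : ∀ k : ℤ, a (k - 2*nφ) ≠ 0 → k ∈ S := by
    intro k hk
    apply Finset.mem_union_right
    refine Finset.mem_image.2 ⟨k - 2*nφ, ?_, by ring⟩
    exact (Set.Finite.mem_toFinset hfa).2 hk
  have hS_Ab : ∀ k, Ab k ≠ 0 → k ∈ S := by
    intro k hk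
    by_contra hns
    apply hk
    have hA0 : A k = 0 := by by_contra h; exact hns (hS_A k h)
    have ha0 : a (k - 2*nφ) = 0 := by by_contra h; exact hns (hS_a k h)
    ext w j
    cases w with
    | inl i => simp [hAb_def, hA0]
    | inr i => simp [hAb_def, ha0]
  have hS_a' : ∀ k : ℤ, (fun k' => a (k' - 2*nφ)) k ≠ 0 → k ∈ S := hS_a
  -- row restrictions of the stacked tail filter
  have hAbrow1 : ∀ (n' : ℤ) (i : Fin p) (y : ℝ),
      filtSumGe Ab φ n' (Sum.inl i) y = filtSumGe A φ n' i y := fun _ _ _ => rfl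
  have hAbrow2 : ∀ (n' : ℤ) (i : Fin r) (y : ℝ),
      filtSumGe Ab φ n' (Sum.inr i) y
        = filtSumGe (fun k => a (k - 2*nφ)) φ n' i y := fun _ _ _ => rfl
  -- a.e. refinement of the base family, with tail beyond nφ
  have hbref : ∀ w : Fin p ⊕ Fin r, ∀ᵐ x : ℝ ∂volume,
      base w x = 2 * (∑ w', B w w' * base w' (2*x))
        + 2 * filtSumGe Ab φ (nφ+1) w (2*x) := by
    intro w
    cases w with
    | inl i =>
        filter_upwards [hrefφL i] with x hx
        have hb1 : base (Sum.inl i) x = φL i x := rfl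
        rw [hb1, hx, filtSumGe_split A φ nφ i (2*x) S hS_A, Fintype.sum_sum_type,
          hAbrow1]
        simp only [hB_def, hbase_def, Matrix.of_apply, Sum.elim_inl, Sum.elim_inr]
        ring
    | inr i =>
        filter_upwards [(hi₁ nφ le_rfl i).2] with x hx
        have hb1 : base (Sum.inr i) x = φ i (x - (nφ:ℝ)) := rfl
        rw [hb1, hx, filtSumGe_split (fun k => a (k - 2*nφ)) φ nφ i (2*x) S hS_a',
          Fintype.sum_sum_type, hAbrow2]
        simp only [hB_def, hbase_def, Matrix.of_apply, Sum.elim_inl, Sum.elim_inr]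
        simp only [zero_mul, Finset.sum_const_zero]
        ring
  -- tails vanish pointwise near 0
  obtain ⟨δt, hδt, htail⟩ : ∃ δ > 0, ∀ x ∈ Set.Ico (0:ℝ) δ,
      ∀ kj ∈ (S.filter (fun k => nφ+1 ≤ k)) ×ˢ (Finset.univ : Finset (Fin r)),
        φ kj.2 (2*x - (kj.1:ℝ)) = 0 := by
    apply exists_pos_forall_Ico
    rintro ⟨k, j⟩ hkj
    have hk : nφ + 1 ≤ k := by
      simp only [Finset.mem_product, Finset.mem_filter] at hkj
      exact hkj.1.2
    obtain ⟨δ, hδ, h0⟩ := hφz j k hk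
    exact ⟨δ/2, by linarith, fun x hx =>
      h0 (2*x) ⟨by linarith [hx.1], by linarith [hx.2]⟩⟩
  have htail0 : ∀ w, ∀ x ∈ Set.Ico (0:ℝ) δt, filtSumGe Ab φ (nφ+1) w (2*x) = 0 := by
    intro w x hx
    rw [filtSumGe_eq_sum Ab φ (nφ+1) w (2*x) S hS_Ab]
    apply Finset.sum_eq_zero
    intro k hk
    apply Finset.sum_eq_zero
    intro j _
    rw [htail x hx (k, j) (Finset.mem_product.2 ⟨hk, Finset.mem_univ _⟩), mul_zero]
  -- pointwise refinement near 0 (without tail)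
  obtain ⟨δG, hδG, hbG⟩ : ∃ δ > 0, ∀ x ∈ Set.Ico (0:ℝ) δ,
      ∀ w ∈ (Finset.univ : Finset (Fin p ⊕ Fin r)),
        base w x = 2 * ∑ w', B w w' * base w' (2*x) := by
    apply exists_pos_forall_Ico
    intro w _
    have hDc : ContinuousOn (fun x => base w x - 2 * ∑ w', B w w' * base w' (2*x))
        (Set.Ico (0:ℝ) (εb/2)) := by
      apply ContinuousOn.sub
      · exact (hsmb w).continuousOn.mono (Set.Ico_subset_Ico_right (by linarith))
      · apply ContinuousOn.mul continuousOn_const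
        apply continuousOn_finset_sum
        intro w' _
        apply ContinuousOn.mul continuousOn_const
        apply ((hsmb w').continuousOn).comp ((continuous_const.mul continuous_id).continuousOn)
        intro y hy
        simp only [Set.mem_Ico, id_eq, Pi.mul_apply] at hy ⊢
        exact ⟨by linarith [hy.1], by linarith [hy.2]⟩
    have hae : ∀ᵐ x : ℝ ∂volume, x ∈ Set.Ioo (0:ℝ) δt →
        (fun x => base w x - 2 * ∑ w', B w w' * base w' (2*x)) x = 0 := by
      filter_upwards [hbref w] with x hx hmem
      show base w x - 2 * ∑ w', B w w' * base w' (2*x) = 0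
      rw [hx, htail0 w x ⟨le_of_lt hmem.1, hmem.2⟩]
      ring
    have hz := eqzero_of_ae_zero (show (0:ℝ) < εb/2 by linarith) hδt hDc hae
    refine ⟨min (εb/2) δt, lt_min (by linarith) hδt, fun x hx => ?_⟩
    have hzz : base w x - 2 * ∑ w', B w w' * base w' (2*x) = 0 := hz x hx
    exact sub_eq_zero.1 hzz
  -- the Mp data of the base family
  set md : (Fin p ⊕ Fin r) → Fin (ℓ+1) → ℂ :=
    fun w t => iteratedDerivWithin (js t) (base w) (Set.Ici 0) 0 with hmd_def
  have hcomp2 : ∀ (w' : Fin p ⊕ Fin r) (j : ℕ), j ≤ m - 1 →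
      ContDiffOn ℝ (j:ℕ) (fun x : ℝ => base w' (2*x)) (Set.Ico (0:ℝ) (εb/2)) := by
    intro w' j hj
    apply (hsmj w' j hj).comp ((contDiff_const.mul contDiff_id).contDiffOn)
    intro y hy
    simp only [Set.mem_Ico, id_eq] at hy ⊢
    exact ⟨by linarith [hy.1], by linarith [hy.2]⟩
  have hm2 : ∀ (t : Fin (ℓ+1)) (w : Fin p ⊕ Fin r),
      md w t = 2^(js t + 1) * ∑ w', B w w' * md w' t := by
    intro t w
    have h1 : md w t = iteratedDerivWithin (js t)
        (fun x => ∑ w', (2 * B w w') * base w' (2*x)) (Set.Ici 0) 0 := by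
      rw [hmd_def]
      apply dW_congr hδG (fun x hx => ?_) (js t)
      rw [hbG x hx w (Finset.mem_univ w), Finset.mul_sum]
      exact Finset.sum_congr rfl fun w' _ => by ring
    rw [h1, dW_sum Finset.univ _ _ (show (0:ℝ) < εb/2 by linarith)
        (fun w' _ => hcomp2 w' (js t) (hjs' t))]
    have h2 : ∀ w' : Fin p ⊕ Fin r,
        iteratedDerivWithin (js t) (fun x : ℝ => base w' (2*x)) (Set.Ici 0) 0
        = 2^(js t) * iteratedDerivWithin (js t) (base w') (Set.Ici 0) 0 :=
      fun w' => dW_comp_two hεb (hsmj w' (js t) (hjs' t))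
    rw [Finset.mul_sum]
    apply Finset.sum_congr rfl
    intro w' _
    rw [h2 w', hmd_def]
    ring
  -- the linear map given by the Mp data
  set f : ((Fin p ⊕ Fin r) → ℂ) →ₗ[ℂ] (Fin (ℓ+1) → ℂ) :=
    { toFun := fun c => ∑ w, c w • md w
      map_add' := fun c₁ c₂ => by
        simp only [Pi.add_apply, add_smul]
        rw [Finset.sum_add_distrib]
      map_smul' := fun s c => by
        simp only [Pi.smul_apply, smul_eq_mul, RingHom.id_apply, ← smul_smul]
        rw [← Finset.smul_sum] } with hf_def
  have hf_apply : ∀ (c : (Fin p ⊕ Fin r) → ℂ) (t : Fin (ℓ+1)),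
      f c t = ∑ w, c w * md w t := by
    intro c t
    show (∑ w, c w • md w) t = _
    rw [Finset.sum_apply]
    exact Finset.sum_congr rfl fun w _ => rfl
  have h2ne : ∀ t : Fin (ℓ+1), ((2:ℂ)^(js t + 1)) ≠ 0 :=
    fun t => pow_ne_zero _ two_ne_zero
  -- kernel invariance under B
  have hKB : ∀ c : (Fin p ⊕ Fin r) → ℂ, f c = 0 →
      f (fun w' => ∑ w, c w * B w w') = 0 := by
    intro c hc
    funext t
    have hct : ∑ w, c w * md w t = 0 := by
      have h0 := congrFun hc t
      rwa [hf_apply] at h0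
    rw [hf_apply]
    have e1 : ∑ w', (∑ w, c w * B w w') * md w' t
        = ∑ w', ∑ w, c w * B w w' * md w' t :=
      Finset.sum_congr rfl fun w' _ => by rw [Finset.sum_mul]
    have hSig : ∀ w, ∑ w', B w w' * md w' t = ((2:ℂ)^(js t + 1))⁻¹ * md w t := by
      intro w
      rw [hm2 t w, ← mul_assoc, inv_mul_cancel₀ (h2ne t), one_mul]
    have e2 : ∀ w, ∑ w', c w * B w w' * md w' t
        = c w * (((2:ℂ)^(js t + 1))⁻¹ * md w t) := by
      intro w
      rw [← hSig w, Finset.mul_sum]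
      exact Finset.sum_congr rfl fun w' _ => by ring
    rw [e1, Finset.sum_comm]
    rw [Finset.sum_congr rfl fun w _ => e2 w]
    have e3 : ∑ w, c w * (((2:ℂ)^(js t + 1))⁻¹ * md w t)
        = ((2:ℂ)^(js t + 1))⁻¹ * ∑ w, c w * md w t := by
      rw [Finset.mul_sum]
      exact Finset.sum_congr rfl fun w _ => by ring
    rw [e3, hct, mul_zero]
    simp
  -- choice of a complement and adapted bases
  set K := LinearMap.ker f with hK_def
  obtain ⟨Kc, hKc⟩ := Submodule.exists_isCompl K
  set bK : Module.Basis (Fin (Module.finrank ℂ K)) ℂ K := Module.finBasis ℂ K with hbK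
  set bKc : Module.Basis (Fin (Module.finrank ℂ Kc)) ℂ Kc := Module.finBasis ℂ Kc with hbKc
  set eqv : (Kc × K) ≃ₗ[ℂ] ((Fin p ⊕ Fin r) → ℂ) :=
    Submodule.prodEquivOfIsCompl Kc K hKc.symm with heqv
  have heqv_apply : ∀ (x : Kc) (y : K),
      eqv (x, y) = (x : (Fin p ⊕ Fin r) → ℂ) + (y : (Fin p ⊕ Fin r) → ℂ) := by
    intro x y
    have hco := Submodule.coe_prodEquivOfIsCompl Kc K hKc.symm
    calc eqv (x, y) = (↑(Submodule.prodEquivOfIsCompl Kc K hKc.symm)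
        : Kc × K →ₗ[ℂ] ((Fin p ⊕ Fin r) → ℂ)) (x, y) := rfl
    _ = (Kc.subtype.coprod K.subtype) (x, y) := by rw [hco]
    _ = ↑x + ↑y := by simp
  set b : Module.Basis ((Fin (Module.finrank ℂ Kc)) ⊕ (Fin (Module.finrank ℂ K))) ℂ
      ((Fin p ⊕ Fin r) → ℂ) := (bKc.prod bK).map eqv with hb_def
  have hb_inl : ∀ u, b (Sum.inl u) = ((bKc u : (Fin p ⊕ Fin r) → ℂ)) := by
    intro u
    rw [hb_def, Module.Basis.map_apply, Module.Basis.prod_apply]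
    simp only [Sum.elim_inl, Function.comp_apply, LinearMap.coe_inl]
    rw [heqv_apply]
    simp
  have hb_inr : ∀ u, b (Sum.inr u) = ((bK u : (Fin p ⊕ Fin r) → ℂ)) := by
    intro u
    rw [hb_def, Module.Basis.map_apply, Module.Basis.prod_apply]
    simp only [Sum.elim_inr, Function.comp_apply, LinearMap.coe_inr]
    rw [heqv_apply]
    simp
  -- dimensions
  have hdim : Module.finrank ℂ Kc + Module.finrank ℂ K = p + r := by
    have h1 := Submodule.finrank_sup_add_finrank_inf_eq K Kc
    rw [hKc.sup_eq_top, hKc.inf_eq_bot, finrank_top, finrank_bot, add_zero] at h1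
    have h2 : Module.finrank ℂ ((Fin p ⊕ Fin r) → ℂ) = p + r := by
      rw [Module.finrank_pi]
      simp
    omega
  -- the change of basis matrices
  set Pm : Matrix (Fin p ⊕ Fin r)
      ((Fin (Module.finrank ℂ Kc)) ⊕ (Fin (Module.finrank ℂ K))) ℂ :=
    (Pi.basisFun ℂ (Fin p ⊕ Fin r)).toMatrix ⇑b with hPm
  set Qm := b.toMatrix ⇑(Pi.basisFun ℂ (Fin p ⊕ Fin r)) with hQm
  have hPQ : Pm * Qm = 1 := Module.Basis.toMatrix_mul_toMatrix_flip _ b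
  have hQP : Qm * Pm = 1 := Module.Basis.toMatrix_mul_toMatrix_flip b _
  set Cm := Pm.transpose with hCm
  set Dm := Qm.transpose with hDm
  have hCD : Cm * Dm = 1 := by
    rw [hCm, hDm, ← Matrix.transpose_mul, hQP, Matrix.transpose_one]
  have hDC : Dm * Cm = 1 := by
    rw [hCm, hDm, ← Matrix.transpose_mul, hPQ, Matrix.transpose_one]
  have hCrow : ∀ u w, Cm u w = (b u : (Fin p ⊕ Fin r) → ℂ) w := by
    intro u w
    rw [hCm, Matrix.transpose_apply, hPm, Module.Basis.toMatrix_apply, Pi.basisFun_repr]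
  have hCrow_inl : ∀ u, Cm (Sum.inl u) = ((bKc u : (Fin p ⊕ Fin r) → ℂ)) := by
    intro u
    funext w
    rw [hCrow, hb_inl]
  have hCrow_inr : ∀ u, Cm (Sum.inr u) = ((bK u : (Fin p ⊕ Fin r) → ℂ)) := by
    intro u
    funext w
    rw [hCrow, hb_inr]
  -- Mp of a linear combination of the base family
  have hMp_comb : ∀ (c : (Fin p ⊕ Fin r) → ℂ) (t : Fin (ℓ+1)),
      iteratedDerivWithin (js t) (fun x => ∑ w, c w * base w x) (Set.Ici 0) 0
        = f c t := by
    intro c t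
    rw [dW_sum Finset.univ c base hεb (fun w _ => hsmj w (js t) (hjs' t)), hf_apply]
  -- Mp vanishes on the interior block
  have h1' : ∀ u, (fun t => iteratedDerivWithin (js t)
      (fun x => ∑ w, Cm (Sum.inr u) w * base w x) (Set.Ici 0) 0)
        = (0 : Fin (ℓ+1) → ℂ) := by
    intro u
    funext t
    rw [hMp_comb, hCrow_inr u]
    have hf0 : f ((bK u : (Fin p ⊕ Fin r) → ℂ)) = 0 := LinearMap.mem_ker.1 (bK u).2
    rw [hf0]
  -- linear independence of the Mp data of the edge block
  have hfres_ker : LinearMap.ker (f.comp Kc.subtype) = ⊥ := by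
    rw [LinearMap.ker_eq_bot']
    intro x hx
    have hxK : (x : (Fin p ⊕ Fin r) → ℂ) ∈ K ⊓ Kc := ⟨LinearMap.mem_ker.2 hx, x.2⟩
    rw [hKc.inf_eq_bot] at hxK
    exact Subtype.ext (by simpa using hxK)
  have hFE : (fun u => (fun t => iteratedDerivWithin (js t)
      (fun x => ∑ w, Cm (Sum.inl u) w * base w x) (Set.Ici 0) 0))
      = fun u => f ((bKc u : (Fin p ⊕ Fin r) → ℂ)) := by
    funext u t
    rw [hMp_comb, hCrow_inl u]
  have h2' : LinearIndependent ℂ (fun u => (fun t => iteratedDerivWithin (js t)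
      (fun x => ∑ w, Cm (Sum.inl u) w * base w x) (Set.Ici 0) 0)) := by
    rw [hFE]
    exact bKc.linearIndependent.map' (f.comp Kc.subtype) hfres_ker
  -- span identities
  have hsingle : ∀ w, f (Pi.single w 1) = md w := by
    intro w
    funext t
    rw [hf_apply]
    rw [Finset.sum_eq_single w (fun w' _ hne => by rw [Pi.single_eq_of_ne hne, zero_mul])
      (fun h => absurd (Finset.mem_univ w) h)]
    rw [Pi.single_eq_same, one_mul]
  have hsp1 : Submodule.span ℂ (Set.range fun u => f ((bKc u : (Fin p ⊕ Fin r) → ℂ)))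
      = LinearMap.range f := by
    apply le_antisymm
    · rw [Submodule.span_le]
      rintro v ⟨u, rfl⟩
      exact SetLike.mem_coe.2 (LinearMap.mem_range_self f _)
    · rintro v hv
      obtain ⟨c, rfl⟩ := LinearMap.mem_range.1 hv
      have hcsup : c ∈ K ⊔ Kc := by rw [hKc.sup_eq_top]; exact Submodule.mem_top
      obtain ⟨y, hy, z, hz, rfl⟩ := Submodule.mem_sup.1 hcsup
      have hfy : f y = 0 := LinearMap.mem_ker.1 hy
      rw [map_add, hfy, zero_add]
      have hz2 : z = ∑ u, (bKc.repr ⟨z, hz⟩) u • ((bKc u : (Fin p ⊕ Fin r) → ℂ)) := by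
        have hc := congrArg (Subtype.val) (bKc.sum_repr ⟨z, hz⟩).symm
        simpa only [Submodule.coe_sum, Submodule.coe_smul] using hc
      rw [hz2, map_sum]
      apply Submodule.sum_mem
      intro u _
      rw [LinearMap.map_smul]
      exact Submodule.smul_mem _ _ (Submodule.subset_span ⟨u, rfl⟩)
  have hsp2 : Submodule.span ℂ (Set.range fun w : HIdx (Fin p) r nφ =>
      (fun t => iteratedDerivWithin (js t) (PhiFam φL φ nφ w) (Set.Ici 0) 0))
      = LinearMap.range f := by
    apply le_antisymm
    · rw [Submodule.span_le]
      rintro v ⟨w, rfl⟩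
      cases w with
      | inl i =>
          have hmem := LinearMap.mem_range_self f (Pi.single (Sum.inl i) 1)
          rw [hsingle] at hmem
          exact SetLike.mem_coe.2 hmem
      | inr ik =>
          obtain ⟨i, k, hkle⟩ := ik
          rcases eq_or_lt_of_le hkle with heq | hlt
          · subst heq
            have hmem := LinearMap.mem_range_self f (Pi.single (Sum.inr i) 1)
            rw [hsingle] at hmem
            exact SetLike.mem_coe.2 hmem
          · show (fun t => iteratedDerivWithin (js t) (fun x => φ i (x - (k:ℝ)))
                (Set.Ici 0) 0) ∈ (LinearMap.range f : Set (Fin (ℓ+1) → ℂ))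
            have h0 : (fun t => iteratedDerivWithin (js t) (fun x => φ i (x - (k:ℝ)))
                (Set.Ici 0) 0) = (0 : Fin (ℓ+1) → ℂ) := by
              funext t
              exact hMps i k hlt (js t)
            rw [h0]
            exact SetLike.mem_coe.2 (Submodule.zero_mem _)
    · rintro v hv
      obtain ⟨c, rfl⟩ := LinearMap.mem_range.1 hv
      show (∑ w, c w • md w) ∈ _
      apply Submodule.sum_mem
      intro w _
      apply Submodule.smul_mem
      apply Submodule.subset_span
      cases w with
      | inl i => exact ⟨Sum.inl i, rfl⟩
      | inr i => exact ⟨Sum.inr (i, ⟨nφ, le_refl _⟩), rfl⟩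
  have h3' : Submodule.span ℂ (Set.range fun u => (fun t => iteratedDerivWithin (js t)
      (fun x => ∑ w, Cm (Sum.inl u) w * base w x) (Set.Ici 0) 0))
      = Submodule.span ℂ (Set.range fun w : HIdx (Fin p) r nφ =>
        (fun t => iteratedDerivWithin (js t) (PhiFam φL φ nφ w) (Set.Ici 0) 0)) := by
    rw [hFE, hsp1, hsp2]
  -- the refinement matrices for the interior block
  have hb_inr_memK : ∀ u, (b (Sum.inr u)) ∈ K := fun u => by
    rw [hb_inr u]; exact (bK u).2
  have hBrow_mem : ∀ u, (fun w' => ∑ w, (b (Sum.inr u)) w * B w w') ∈ K := by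
    intro u
    have hf0 : f (b (Sum.inr u)) = 0 := LinearMap.mem_ker.1 (hb_inr_memK u)
    exact LinearMap.mem_ker.2 (hKB _ hf0)
  set AL' : Matrix (Fin (Module.finrank ℂ K)) (Fin (Module.finrank ℂ K)) ℂ :=
    fun u u' => bK.repr ⟨fun w' => ∑ w, (b (Sum.inr u)) w * B w w', hBrow_mem u⟩ u'
    with hAL'_def
  have hALC : ∀ u w', (∑ w, Cm (Sum.inr u) w * B w w')
      = ∑ u', AL' u u' * Cm (Sum.inr u') w' := by
    intro u w'
    set v : K := ⟨fun w'' => ∑ w, (b (Sum.inr u)) w * B w w'', hBrow_mem u⟩ with hv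
    have h1 : ∑ w, Cm (Sum.inr u) w * B w w' = (v : (Fin p ⊕ Fin r) → ℂ) w' := by
      show _ = ∑ w, (b (Sum.inr u)) w * B w w'
      exact Finset.sum_congr rfl fun w _ => by rw [hCrow]
    have h2 : v = ∑ u', AL' u u' • bK u' := (bK.sum_repr v).symm
    have h3 : (v : (Fin p ⊕ Fin r) → ℂ) w' = ∑ u', AL' u u' * (bK u' : (Fin p ⊕ Fin r) → ℂ) w' := by
      rw [h2, Submodule.coe_sum, Finset.sum_apply]
      apply Finset.sum_congr rfl
      intro u' _
      simp [smul_eq_mul]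
    have h4 : ∀ u', ((bK u' : (Fin p ⊕ Fin r) → ℂ)) w' = Cm (Sum.inr u') w' :=
      fun u' => by rw [hCrow, hb_inr]
    rw [h1, h3]
    exact Finset.sum_congr rfl fun u' _ => by rw [h4]
  set A' : ℤ → Matrix (Fin (Module.finrank ℂ K)) (Fin r) ℂ :=
    fun k => Matrix.of (fun u j => ∑ w, Cm (Sum.inr u) w * Ab k w j) with hA'_def
  have hS_A' : ∀ k, A' k ≠ 0 → k ∈ S := by
    intro k hk
    by_contra hns
    apply hk
    have hA0 : A k = 0 := by by_contra h; exact hns (hS_A k h)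
    have ha0 : a (k - 2*nφ) = 0 := by by_contra h; exact hns (hS_a k h)
    ext u j
    rw [hA'_def]
    simp only [Matrix.of_apply, Matrix.zero_apply]
    apply Finset.sum_eq_zero
    intro w _
    cases w with
    | inl i => simp [hAb_def, hA0]
    | inr i => simp [hAb_def, ha0]
  have hfA' : FinSupp A' := Set.Finite.subset S.finite_toSet (fun k hk =>
    Finset.mem_coe.2 (hS_A' k (Function.mem_support.1 hk)))
  have htail_comb : ∀ u (y : ℝ), ∑ w, Cm (Sum.inr u) w * filtSumGe Ab φ (nφ+1) w y
      = filtSumGe A' φ (nφ+1) u y := by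
    intro u y
    rw [filtSumGe_eq_sum A' φ (nφ+1) u y S hS_A']
    have hterm : ∀ w, Cm (Sum.inr u) w * filtSumGe Ab φ (nφ+1) w y
        = ∑ k ∈ S.filter (fun k => nφ+1 ≤ k), ∑ j,
            Cm (Sum.inr u) w * (Ab k w j * φ j (y - (k:ℝ))) := by
      intro w
      rw [filtSumGe_eq_sum Ab φ (nφ+1) w y S hS_Ab, Finset.mul_sum]
      exact Finset.sum_congr rfl fun k _ => by rw [Finset.mul_sum]
    rw [Finset.sum_congr rfl fun w _ => hterm w, Finset.sum_comm]
    apply Finset.sum_congr rfl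
    intro k _
    rw [Finset.sum_comm]
    apply Finset.sum_congr rfl
    intro j _
    rw [hA'_def]
    simp only [Matrix.of_apply]
    rw [Finset.sum_mul]
    exact Finset.sum_congr rfl fun w _ => by ring
  -- the refinement relation of the interior block
  have h4' : ∀ u, ∀ᵐ x : ℝ ∂volume,
      (∑ w, Cm (Sum.inr u) w * base w x)
        = 2 * ∑ u', AL' u u' * (∑ w, Cm (Sum.inr u') w * base w (2*x))
          + 2 * filtSumGe A' φ (nφ+1) u (2*x) := by
    intro u
    have hb_all : ∀ᵐ x : ℝ ∂volume, ∀ w : Fin p ⊕ Fin r,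
        base w x = 2 * (∑ w', B w w' * base w' (2*x))
          + 2 * filtSumGe Ab φ (nφ+1) w (2*x) := ae_all_iff.2 hbref
    filter_upwards [hb_all] with x hx
    have e0 : ∑ w, Cm (Sum.inr u) w * base w x
        = ∑ w, (2 * ∑ w', Cm (Sum.inr u) w * (B w w' * base w' (2*x))
            + 2 * (Cm (Sum.inr u) w * filtSumGe Ab φ (nφ+1) w (2*x))) := by
      apply Finset.sum_congr rfl
      intro w _
      rw [hx w, mul_add]
      congr 1
      · rw [mul_left_comm, Finset.mul_sum]
      · ring
    have e0' : ∑ w, (2 * ∑ w', Cm (Sum.inr u) w * (B w w' * base w' (2*x))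
            + 2 * (Cm (Sum.inr u) w * filtSumGe Ab φ (nφ+1) w (2*x)))
        = 2 * (∑ w, ∑ w', Cm (Sum.inr u) w * (B w w' * base w' (2*x)))
          + 2 * (∑ w, Cm (Sum.inr u) w * filtSumGe Ab φ (nφ+1) w (2*x)) := by
      rw [Finset.sum_add_distrib, ← Finset.mul_sum, ← Finset.mul_sum]
    have e1 : ∑ w, ∑ w', Cm (Sum.inr u) w * (B w w' * base w' (2*x))
        = ∑ w', (∑ w, Cm (Sum.inr u) w * B w w') * base w' (2*x) := by
      rw [Finset.sum_comm]
      apply Finset.sum_congr rfl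
      intro w' _
      rw [Finset.sum_mul]
      exact Finset.sum_congr rfl fun w _ => by ring
    have e2 : ∑ w', (∑ w, Cm (Sum.inr u) w * B w w') * base w' (2*x)
        = ∑ u', AL' u u' * ∑ w', Cm (Sum.inr u') w' * base w' (2*x) := by
      calc ∑ w', (∑ w, Cm (Sum.inr u) w * B w w') * base w' (2*x)
          = ∑ w', ∑ u', AL' u u' * Cm (Sum.inr u') w' * base w' (2*x) := by
            apply Finset.sum_congr rfl
            intro w' _
            rw [hALC u w', Finset.sum_mul]
        _ = ∑ u', ∑ w', AL' u u' * Cm (Sum.inr u') w' * base w' (2*x) := Finset.sum_comm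
        _ = ∑ u', AL' u u' * ∑ w', Cm (Sum.inr u') w' * base w' (2*x) := by
            apply Finset.sum_congr rfl
            intro u' _
            rw [Finset.mul_sum]
            exact Finset.sum_congr rfl fun w' _ => by ring
    rw [e0, e0', e1, e2, htail_comb u (2*x)]
  -- boundary conditions for the whole new family
  have h5' : ∀ w : HIdx (Fin (Module.finrank ℂ K)) r (nφ + 1),
      (fun t => iteratedDerivWithin (js t)
        (PhiFam (fun u => fun x => ∑ w', Cm (Sum.inr u) w' * base w' x) φ (nφ+1) w)
        (Set.Ici 0) 0) = (0 : Fin (ℓ+1) → ℂ) := by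
    intro w
    cases w with
    | inl u => exact h1' u
    | inr ik =>
        funext t
        exact hMps ik.1 ik.2.1 ik.2.2 (js t)
  refine ⟨Module.finrank ℂ Kc, Module.finrank ℂ K, hdim, Cm, Dm, hCD, hDC, ?_⟩
  exact ⟨h1', h2', h3', ⟨AL', A', hfA', h4'⟩, h5'⟩

end Wavelets
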